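/- For every integer n ≥ 2, the coherence of the optimal probe state is strictly less than the maximal coherence available in dimension n+1: (2/(n+2))·cot²(π/(2n+4)) − 1 < n. (Hence maximally coherent probe states are not required for optimal Bayesian phase estimation.) -/

import Mathlib

set_option maxHeartbeats 1600000


open Real

private lemma cot_sq_lt_aux {x s c B : ℝ} (hs0 : 0 < s) (hs : s ≤ Real.sin x)
    (hcos0 : 0 ≤ Real.cos x) (hc : Real.cos x ≤ c) (hB0 : 0 ≤ B)
    (hB : c ^ 2 < B * s ^ 2) : Real.cot x ^ 2 < B := by
  have hsin : 0 < Real.sin x := lt_of_lt_of_le hs0 hs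
  rw [Real.cot_eq_cos_div_sin, div_pow, div_lt_iff₀ (by positivity)]
  have h1 : Real.cos x ^ 2 ≤ c ^ 2 := by nlinarith
  have h2 : B * s ^ 2 ≤ B * Real.sin x ^ 2 :=
    mul_le_mul_of_nonneg_left (by nlinarith) hB0
  linarith

private lemma sin_lb {x a : ℝ} (ha0 : 0 < a) (hax : a ≤ x) (hx1 : x ≤ 1) :
    a - a ^ 3 / 4 < Real.sin x := by
  have h := Real.sin_gt_sub_cube (lt_of_lt_of_le ha0 hax)
  have ha1 : a ≤ 1 := le_trans hax hx1
  have key : x ^ 2 + a * x + a ^ 2 ≤ 3 := by nlinarith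
  nlinarith [mul_le_mul_of_nonneg_left key (sub_nonneg.2 hax)]

private lemma cos_ub {x a : ℝ} (ha0 : 0 < a) (hax : a ≤ x) (hx1 : x ≤ 1)
    (ha1 : a ≤ 1) : Real.cos x < 1 - 2 * ((a / 2) - (a / 2) ^ 3 / 4) ^ 2 := by
  have hs : (a / 2) - (a / 2) ^ 3 / 4 < Real.sin (x / 2) := by
    have h := Real.sin_gt_sub_cube (x := x / 2) (by linarith)
    have key : (x / 2) ^ 2 + (a / 2) * (x / 2) + (a / 2) ^ 2 ≤ 3 := by nlinarith
    nlinarith [mul_le_mul_of_nonneg_left key (by linarith : (0:ℝ) ≤ x / 2 - a / 2)]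
  have hpos : 0 < (a / 2) - (a / 2) ^ 3 / 4 := by
    nlinarith [mul_pos (mul_pos ha0 ha0) ha0, mul_pos ha0 ha0]
  have hcos : Real.cos x = 1 - 2 * Real.sin (x / 2) ^ 2 := by
    have h := Real.cos_two_mul' (x / 2)
    have h2 := Real.sin_sq_add_cos_sq (x / 2)
    have : 2 * (x / 2) = x := by ring
    rw [this] at h
    nlinarith
  rw [hcos]
  nlinarith

/-- The coherence `𝒞* = (2/(n+2))·cot²(π/(2n+4)) − 1` of the optimal probe
state is strictly smaller than the maximal coherence `n` available in
dimension `n+1`. -/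
theorem optimal_coherence_lt_max (n : ℕ) (hn : 2 ≤ n) :
    2 / ((n : ℝ) + 2) * Real.cot (π / (2 * n + 4)) ^ 2 - 1 < n := by
  have hπ := Real.pi_gt_d6
  have hπ' := Real.pi_lt_d2
  have hn2 : (0:ℝ) < (n : ℝ) + 2 := by positivity
  have key : Real.cot (π / (2 * n + 4)) ^ 2 < ((n : ℝ) + 1) * ((n : ℝ) + 2) / 2 := by
    set x : ℝ := π / (2 * n + 4) with hxdef
    have hden : (0:ℝ) < 2 * n + 4 := by positivity
    have hx0 : 0 < x := by positivity
    have hxle : x ≤ π / 8 := by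
      apply div_le_div_of_nonneg_left (le_of_lt Real.pi_pos) (by norm_num)
      have : (2:ℝ) ≤ (n : ℝ) := by exact_mod_cast hn
      linarith
    have hx1 : x ≤ 1 := by
      have : π / 8 ≤ 1 := by linarith
      linarith
    have hxhalf : x < π / 2 := by
      have : π / 8 < π / 2 := by linarith [Real.pi_pos]
      linarith
    have hcos0 : 0 ≤ Real.cos x := Real.cos_nonneg_of_mem_Icc ⟨by linarith, le_of_lt hxhalf⟩
    have hsin0 : 0 < Real.sin x := Real.sin_pos_of_pos_of_lt_pi hx0 (by linarith [Real.pi_pos])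
    rcases lt_or_ge n 4 with h4 | h4
    · interval_cases n
      · -- n = 2, x = π / 8
        have hx : x = π / 8 := by rw [hxdef]; norm_num
        have hxa : (392699 : ℝ) / 1000000 ≤ x := by rw [hx]; linarith
        have hs : (377559 : ℝ) / 1000000 ≤ Real.sin x := by
          have := sin_lb (a := 392699 / 1000000) (by norm_num) hxa hx1
          nlinarith
        have hc : Real.cos x ≤ 924373 / 1000000 := by
          have := cos_ub (a := 392699 / 1000000) (by norm_num) hxa hx1 (by norm_num)
          nlinarith
        have : Real.cot x ^ 2 < 6 :=
          cot_sq_lt_aux (by norm_num) hs hcos0 hc (by norm_num) (by norm_num)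
        norm_num
        linarith
      · -- n = 3, x = π / 10
        have hx : x = π / 10 := by rw [hxdef]; norm_num
        have hxa : (3141592 : ℝ) / 10000000 ≤ x := by rw [hx]; linarith
        have hs : (306407 : ℝ) / 1000000 ≤ Real.sin x := by
          have := sin_lb (a := 3141592 / 10000000) (by norm_num) hxa hx1
          nlinarith
        have hc : Real.cos x ≤ 951259 / 1000000 := by
          have := cos_ub (a := 3141592 / 10000000) (by norm_num) hxa hx1 (by norm_num)
          nlinarith
        have : Real.cot x ^ 2 < 10 :=
          cot_sq_lt_aux (by norm_num) hs hcos0 hc (by norm_num) (by norm_num)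
        norm_num
        linarith
    · -- n ≥ 4 : cot x < 1/x
      have hn4 : (4:ℝ) ≤ (n : ℝ) := by exact_mod_cast h4
      have htan := Real.lt_tan hx0 hxhalf
      have hcos0' : 0 < Real.cos x := Real.cos_pos_of_mem_Ioo ⟨by linarith, hxhalf⟩
      have hcot : Real.cot x < 1 / x := by
        rw [Real.cot_eq_cos_div_sin, div_lt_div_iff₀ hsin0 hx0]
        rw [Real.tan_eq_sin_div_cos, lt_div_iff₀ hcos0'] at htan
        linarith
      have hcot0 : 0 < Real.cot x := by
        rw [Real.cot_eq_cos_div_sin]; positivity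
      have h1 : Real.cot x ^ 2 < (1 / x) ^ 2 := by nlinarith
      have hxval : 1 / x = (2 * n + 4) / π := by
        rw [hxdef, one_div_div]
      have h2 : ((2 * (n:ℝ) + 4) / π) ^ 2 < ((n : ℝ) + 1) * ((n : ℝ) + 2) / 2 := by
        rw [div_pow, div_lt_iff₀ (by positivity)]
        have hπ2 : (9.8696 : ℝ) < π ^ 2 := by nlinarith
        have hq : (9.8696 : ℝ) * (((n:ℝ) + 1) * ((n:ℝ) + 2)) ≤ (((n:ℝ) + 1) * ((n:ℝ) + 2)) * π ^ 2 := by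
          nlinarith [mul_le_mul_of_nonneg_left (le_of_lt hπ2) (show (0:ℝ) ≤ ((n:ℝ) + 1) * ((n:ℝ) + 2) by positivity)]
        nlinarith [mul_le_mul_of_nonneg_left hn4 (show (0:ℝ) ≤ (n:ℝ) by positivity)]
      rw [hxval] at h1
      linarith
  have h3 : 2 / ((n : ℝ) + 2) * Real.cot (π / (2 * n + 4)) ^ 2 <
      2 / ((n : ℝ) + 2) * (((n : ℝ) + 1) * ((n : ℝ) + 2) / 2) := by
    apply mul_lt_mul_of_pos_left key (by positivity)
  have h4 : 2 / ((n : ℝ) + 2) * (((n : ℝ) + 1) * ((n : ℝ) + 2) / 2) = (n : ℝ) + 1 := by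
    field_simp
  linarith
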